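/- Let Γ be a group, g ∈ Γ, and n₀ ∈ Γ an element not commuting with g (n₀ ∉ C_Γ(g)). Let F ⊆ Γ be a finite set containing g, and set Z = {sg⁻¹ : s ∈ F\{g}}. Suppose n₀ satisfies n₀ Z n₀⁻¹ ∩ Z = ∅. Then for s, t ∈ F, the equation s⁻¹ n₀ t n₀⁻¹ = g⁻¹ n₀ g n₀⁻¹ holds if and only if s = t = g. -/
import Mathlib

/-- Let g ∈ F ⊆ Γ (F finite), Z = {sg⁻¹ : s ∈ F \ {g}}, and let n₀ be
an element not commuting with g such that n₀Zn₀⁻¹ ∩ Z = ∅. Then for s, t ∈ F,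
s⁻¹n₀tn₀⁻¹ = g⁻¹n₀gn₀⁻¹ if and only if s = t = g. -/
theorem stmt19 {Γ : Type*} [Group Γ] (g n₀ : Γ) (F : Finset Γ) (hgF : g ∈ F)
    (hn₀ : n₀ * g ≠ g * n₀)
    (hdisj : ∀ z ∈ {z : Γ | ∃ s ∈ F, s ≠ g ∧ z = s * g⁻¹},
      n₀ * z * n₀⁻¹ ∉ {z : Γ | ∃ s ∈ F, s ≠ g ∧ z = s * g⁻¹}) :
    ∀ s ∈ F, ∀ t ∈ F,
      (s⁻¹ * n₀ * t * n₀⁻¹ = g⁻¹ * n₀ * g * n₀⁻¹ ↔ s = g ∧ t = g) := by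
  intro s hs t ht
  constructor
  · intro h
    have key : n₀ * (t * g⁻¹) * n₀⁻¹ = s * g⁻¹ := by
      have h' : n₀ * t * n₀⁻¹ = s * (g⁻¹ * n₀ * g * n₀⁻¹) := by
        rw [← h]; group
      calc n₀ * (t * g⁻¹) * n₀⁻¹
          = (n₀ * t * n₀⁻¹) * (n₀ * g⁻¹ * n₀⁻¹) := by group
        _ = s * (g⁻¹ * n₀ * g * n₀⁻¹) * (n₀ * g⁻¹ * n₀⁻¹) := by rw [h']
        _ = s * g⁻¹ := by group
    by_cases htg : t = g
    · subst htg
      have : n₀ * (t * t⁻¹) * n₀⁻¹ = 1 := by group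
      have hsg : s * t⁻¹ = 1 := by rw [← key, this]
      have : s = t := by
        have := mul_inv_eq_one.mp hsg
        exact this
      exact ⟨this, rfl⟩
    · by_cases hsg : s = g
      · subst hsg
        have h1 : n₀ * (t * s⁻¹) * n₀⁻¹ = 1 := by rw [key]; group
        have h2 : t * s⁻¹ = 1 := by
          have := h1
          have : n₀ * (t * s⁻¹) * n₀⁻¹ * n₀ = n₀ := by rw [h1]; group
          calc t * s⁻¹ = n₀⁻¹ * (n₀ * (t * s⁻¹) * n₀⁻¹) * n₀ := by group
            _ = n₀⁻¹ * 1 * n₀ := by rw [h1]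
            _ = 1 := by group
        exact absurd (mul_inv_eq_one.mp h2) htg
      · exfalso
        exact hdisj (t * g⁻¹) ⟨t, ht, htg, rfl⟩ ⟨s, hs, hsg, key⟩
  · rintro ⟨rfl, rfl⟩
    rfl
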